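/- For every ε > 0 there exists K > 0 such that for every real k with |k| ≥ K, every eigenvalue λ of M(k) satisfies |Re λ| < ε. (The spectrum of M(k) becomes purely imaginary as |k| → ∞.) -/

import Mathlib

/-- hyperbolic cotangent, `coth x = cosh x / sinh x` (for `x ≠ 0`). -/
noncomputable def coth (x : ℝ) : ℝ := Real.cosh x / Real.sinh x

/-- hyperbolic cosecant, `csch x = 1 / sinh x` (for `x ≠ 0`). -/
noncomputable def csch (x : ℝ) : ℝ := 1 / Real.sinh x

/-- The symmetric tridiagonal matrix `A(k)` of the linearised fluid-loaded plate problem.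
Rows/columns are indexed by `i : Fin n`, corresponding to the 1-based index `i+1`; the plate
separations are `Δh 0, …, Δh n`.  The 1-based entries are
`A(k)_{ii} = (k + coth(kΔh_{i−1}) + coth(kΔhᵢ))/k` and
`A(k)_{i,i+1} = A(k)_{i+1,i} = −csch(kΔhᵢ)/k`. -/
noncomputable def Amat (n : ℕ) (Δh : ℕ → ℝ) (k : ℝ) : Matrix (Fin n) (Fin n) ℝ :=
  fun i j =>
    if (i : ℕ) = (j : ℕ) then (k + coth (k * Δh (i : ℕ)) + coth (k * Δh ((i : ℕ) + 1))) / k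
    else if (i : ℕ) + 1 = (j : ℕ) then -(csch (k * Δh ((i : ℕ) + 1)) / k)
    else if (j : ℕ) + 1 = (i : ℕ) then -(csch (k * Δh ((j : ℕ) + 1)) / k)
    else 0

/-- The symmetric tridiagonal matrix `B(k)`, with 1-based entries
`B(k)_{ii} = U_{i−1}² coth(kΔh_{i−1}) + Uᵢ² coth(kΔhᵢ)` and
`B(k)_{i,i+1} = B(k)_{i+1,i} = −Uᵢ² csch(kΔhᵢ)`. -/
noncomputable def Bmat (n : ℕ) (Δh U : ℕ → ℝ) (k : ℝ) : Matrix (Fin n) (Fin n) ℝ :=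
  fun i j =>
    if (i : ℕ) = (j : ℕ) then
      U (i : ℕ) ^ 2 * coth (k * Δh (i : ℕ)) + U ((i : ℕ) + 1) ^ 2 * coth (k * Δh ((i : ℕ) + 1))
    else if (i : ℕ) + 1 = (j : ℕ) then -(U ((i : ℕ) + 1) ^ 2 * csch (k * Δh ((i : ℕ) + 1)))
    else if (j : ℕ) + 1 = (i : ℕ) then -(U ((j : ℕ) + 1) ^ 2 * csch (k * Δh ((j : ℕ) + 1)))
    else 0

/-- The symmetric tridiagonal matrix `C(k)`, with 1-based entries
`C(k)_{ii} = U_{i−1} coth(kΔh_{i−1}) + Uᵢ coth(kΔhᵢ)` and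
`C(k)_{i,i+1} = C(k)_{i+1,i} = −Uᵢ csch(kΔhᵢ)`. -/
noncomputable def Cmat (n : ℕ) (Δh U : ℕ → ℝ) (k : ℝ) : Matrix (Fin n) (Fin n) ℝ :=
  fun i j =>
    if (i : ℕ) = (j : ℕ) then
      U (i : ℕ) * coth (k * Δh (i : ℕ)) + U ((i : ℕ) + 1) * coth (k * Δh ((i : ℕ) + 1))
    else if (i : ℕ) + 1 = (j : ℕ) then -(U ((i : ℕ) + 1) * csch (k * Δh ((i : ℕ) + 1)))
    else if (j : ℕ) + 1 = (i : ℕ) then -(U ((j : ℕ) + 1) * csch (k * Δh ((j : ℕ) + 1)))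
    else 0

/-- The complex `2n × 2n` block matrix
`M(k) = [[0, Iₙ], [A(k)⁻¹(k B(k) − k⁴ Iₙ), −2i A(k)⁻¹ C(k)]]`,
real matrices being regarded as complex. -/
noncomputable def Mmat (n : ℕ) (Δh U : ℕ → ℝ) (k : ℝ) :
    Matrix (Fin n ⊕ Fin n) (Fin n ⊕ Fin n) ℂ :=
  Matrix.fromBlocks 0 1
    (((Amat n Δh k)⁻¹ *
        (k • Bmat n Δh U k - k ^ 4 • (1 : Matrix (Fin n) (Fin n) ℝ))).map
      (fun x : ℝ => (x : ℂ)))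
    ((-2 * Complex.I) • ((Amat n Δh k)⁻¹ * Cmat n Δh U k).map (fun x : ℝ => (x : ℂ)))


lemma abs_csch_le {t : ℝ} (ht : 1 ≤ |t|) : |csch t| ≤ 1 := by
  have hs : 1 ≤ Real.sinh |t| :=
    le_trans ht (Real.self_le_sinh_iff.mpr (by positivity))
  rw [csch, abs_div, abs_one, Real.abs_sinh]
  rw [div_le_one (by linarith)]; linarith

lemma abs_coth_le {t : ℝ} (ht : 1 ≤ |t|) : |coth t| ≤ 2 := by
  have hs : 1 ≤ Real.sinh |t| :=
    le_trans ht (Real.self_le_sinh_iff.mpr (by positivity))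
  have h1 : Real.cosh |t| - Real.sinh |t| = Real.exp (-|t|) := Real.cosh_sub_sinh _
  have h2 : Real.exp (-|t|) ≤ 1 := Real.exp_le_one_iff.mpr (by linarith)
  rw [coth, abs_div, Real.abs_sinh, abs_of_pos (Real.cosh_pos _), ← Real.cosh_abs,
    div_le_iff₀ (by linarith)]
  linarith

lemma charpoly_eval_eq {N : Type*} [Fintype N] [DecidableEq N] (M : Matrix N N ℂ) (t : ℂ) :
    M.charpoly.eval t = (t • (1 : Matrix N N ℂ) - M).det := by
  have h := RingHom.map_det (Polynomial.evalRingHom t) (Matrix.charmatrix M)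
  rw [Matrix.charpoly]
  rw [show Polynomial.eval t (Matrix.charmatrix M).det
      = (Polynomial.evalRingHom t) (Matrix.charmatrix M).det from rfl, h]
  congr 1
  ext i j
  by_cases hij : i = j
  · subst hij
    simp [Matrix.charmatrix_apply_eq, Matrix.one_apply]
  · simp [Matrix.charmatrix_apply_ne _ _ _ hij, Matrix.one_apply_ne hij]

open Matrix

/-- quadratic form of a real symmetric matrix (as complex) is real -/
lemma form_im_eq_zero {n : ℕ} (R : Matrix (Fin n) (Fin n) ℝ)
    (hR : ∀ i j, R i j = R j i) (x : Fin n → ℂ) :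
    (star x ⬝ᵥ (R.map (fun r : ℝ => (r : ℂ))) *ᵥ x).im = 0 := by
  apply Complex.conj_eq_iff_im.mp
  simp only [dotProduct, mulVec, Pi.star_apply, map_sum, _root_.map_mul, Complex.conj_conj,
    Matrix.map_apply, Complex.conj_ofReal, Finset.mul_sum]
  rw [Finset.sum_comm]
  refine Finset.sum_congr rfl fun i _ => Finset.sum_congr rfl fun j _ => ?_
  rw [hR j i]; simp only [Complex.star_def, Complex.conj_conj]; ring

lemma form_abs_le {n : ℕ} (R : Matrix (Fin n) (Fin n) ℝ) {m : ℝ}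
    (hm : ∀ i j, |R i j| ≤ m) (x : Fin n → ℂ) :
    ‖star x ⬝ᵥ (R.map (fun r : ℝ => (r : ℂ))) *ᵥ x‖
      ≤ m * n * ∑ i, ‖x i‖ ^ 2 := by
  rcases Nat.eq_zero_or_pos n with h0 | hpos
  · subst h0
    simp [dotProduct]
  have hm0 : 0 ≤ m := le_trans (abs_nonneg _) (hm ⟨0, hpos⟩ ⟨0, hpos⟩)
  set T := ∑ i, ‖x i‖ with hT
  have hstep : ‖star x ⬝ᵥ (R.map (fun r : ℝ => (r : ℂ))) *ᵥ x‖ ≤ m * T * T := by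
    have h1 : star x ⬝ᵥ (R.map (fun r : ℝ => (r : ℂ))) *ᵥ x
        = ∑ i, ∑ j, star (x i) * ((R i j : ℂ) * x j) := by
      simp [dotProduct, mulVec, Finset.mul_sum]
    rw [h1]
    calc ‖∑ i, ∑ j, star (x i) * ((R i j : ℂ) * x j)‖
        ≤ ∑ i, ‖∑ j, star (x i) * ((R i j : ℂ) * x j)‖ :=
          norm_sum_le _ _
      _ ≤ ∑ i, ∑ j, ‖star (x i) * ((R i j : ℂ) * x j)‖ :=
          Finset.sum_le_sum fun i _ => norm_sum_le _ _
      _ ≤ ∑ i, ∑ j, ‖x i‖ * (m * ‖x j‖) := by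
          refine Finset.sum_le_sum fun i _ => Finset.sum_le_sum fun j _ => ?_
          rw [norm_mul, norm_mul, Complex.norm_real, Real.norm_eq_abs]
          have h3 : ‖star (x i)‖ = ‖x i‖ := norm_star _
          rw [h3]
          have := hm i j
          gcongr
      _ = m * T * T := by
          simp only [← Finset.mul_sum, ← Finset.sum_mul, hT]
          ring
  refine le_trans hstep ?_
  have hT2 : T * T ≤ n * ∑ i, ‖x i‖ ^ 2 := by
    have := sq_sum_le_card_mul_sum_sq (s := (Finset.univ : Finset (Fin n)))
      (f := fun i => ‖x i‖)
    simpa [sq, Finset.card_univ] using this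
  calc m * T * T = m * (T * T) := by ring
    _ ≤ m * (n * ∑ i, ‖x i‖ ^ 2) := by gcongr
    _ = m * n * ∑ i, ‖x i‖ ^ 2 := by ring

open Matrix

section Aux

lemma tri_symm {n : ℕ} (f g : ℕ → ℝ) (i j : Fin n) :
    (if (i : ℕ) = (j : ℕ) then f (i : ℕ)
      else if (i : ℕ) + 1 = (j : ℕ) then g ((i : ℕ) + 1)
      else if (j : ℕ) + 1 = (i : ℕ) then g ((j : ℕ) + 1) else 0)
    = (if (j : ℕ) = (i : ℕ) then f (j : ℕ)
      else if (j : ℕ) + 1 = (i : ℕ) then g ((j : ℕ) + 1)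
      else if (i : ℕ) + 1 = (j : ℕ) then g ((i : ℕ) + 1) else 0) := by
  by_cases h1 : (i : ℕ) = (j : ℕ)
  · simp [h1]
  · rw [if_neg h1, if_neg (by omega : ¬((j : ℕ) = (i : ℕ)))]
    by_cases h2 : (i : ℕ) + 1 = (j : ℕ)
    · rw [if_pos h2, if_neg (by omega : ¬((j : ℕ) + 1 = (i : ℕ))), if_pos h2]
    · rw [if_neg h2]
      by_cases h3 : (j : ℕ) + 1 = (i : ℕ)
      · rw [if_pos h3, if_pos h3]
      · rw [if_neg h3, if_neg h3, if_neg h2]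

lemma Amat_symm {n : ℕ} (Δh : ℕ → ℝ) (k : ℝ) (i j : Fin n) :
    Amat n Δh k i j = Amat n Δh k j i := by
  unfold Amat
  exact tri_symm (fun m => (k + coth (k * Δh m) + coth (k * Δh (m + 1))) / k)
    (fun m => -(csch (k * Δh m) / k)) i j

lemma Bmat_symm {n : ℕ} (Δh U : ℕ → ℝ) (k : ℝ) (i j : Fin n) :
    Bmat n Δh U k i j = Bmat n Δh U k j i := by
  unfold Bmat
  exact tri_symm (fun m => U m ^ 2 * coth (k * Δh m) + U (m + 1) ^ 2 * coth (k * Δh (m + 1)))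
    (fun m => -(U m ^ 2 * csch (k * Δh m))) i j

lemma Cmat_symm {n : ℕ} (Δh U : ℕ → ℝ) (k : ℝ) (i j : Fin n) :
    Cmat n Δh U k i j = Cmat n Δh U k j i := by
  unfold Cmat
  exact tri_symm (fun m => U m * coth (k * Δh m) + U (m + 1) * coth (k * Δh (m + 1)))
    (fun m => -(U m * csch (k * Δh m))) i j

end Aux

lemma Amat_sub_one_bound {n : ℕ} (Δh : ℕ → ℝ) (k : ℝ) (hk0 : k ≠ 0)
    (hk1 : ∀ i ≤ n, 1 ≤ |k * Δh i|) (i j : Fin n) :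
    |(Amat n Δh k - 1) i j| ≤ 6 / |k| := by
  have hki : 1 ≤ |k * Δh (i : ℕ)| := hk1 _ (le_of_lt i.isLt)
  have hki1 : 1 ≤ |k * Δh ((i : ℕ) + 1)| := hk1 _ i.isLt
  have hkpos : (0 : ℝ) < |k| := abs_pos.mpr hk0
  have hc1 := abs_coth_le hki
  have hc2 := abs_coth_le hki1
  have hcs := abs_csch_le hki1
  rw [Matrix.sub_apply]
  by_cases h1 : (i : ℕ) = (j : ℕ)
  · have hij : i = j := Fin.ext h1
    subst hij
    rw [Matrix.one_apply_eq]
    have he : Amat n Δh k i i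
        = (k + coth (k * Δh (i : ℕ)) + coth (k * Δh ((i : ℕ) + 1))) / k := by
      simp [Amat]
    rw [he]
    have he2 : (k + coth (k * Δh (i : ℕ)) + coth (k * Δh ((i : ℕ) + 1))) / k - 1
        = (coth (k * Δh (i : ℕ)) + coth (k * Δh ((i : ℕ) + 1))) / k := by
      field_simp
      ring
    rw [he2, abs_div, div_le_div_iff₀ hkpos hkpos]
    have := abs_add_le (coth (k * Δh (i : ℕ))) (coth (k * Δh ((i : ℕ) + 1)))
    nlinarith [abs_nonneg (coth (k * Δh (i : ℕ)) + coth (k * Δh ((i : ℕ) + 1)))]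
  · have hij : i ≠ j := fun h => h1 (by rw [h])
    rw [Matrix.one_apply_ne hij, sub_zero]
    by_cases h2 : (i : ℕ) + 1 = (j : ℕ)
    · have he : Amat n Δh k i j = -(csch (k * Δh ((i : ℕ) + 1)) / k) := by
        simp [Amat, h1, h2]
      rw [he, abs_neg, abs_div, div_le_div_iff₀ hkpos hkpos]
      nlinarith
    · by_cases h3 : (j : ℕ) + 1 = (i : ℕ)
      · have hkj1 : 1 ≤ |k * Δh ((j : ℕ) + 1)| := hk1 _ (by omega)
        have hcs' := abs_csch_le hkj1
        have he : Amat n Δh k i j = -(csch (k * Δh ((j : ℕ) + 1)) / k) := by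
          simp [Amat, h1, h2, h3]
        rw [he, abs_neg, abs_div, div_le_div_iff₀ hkpos hkpos]
        nlinarith
      · have he : Amat n Δh k i j = 0 := by simp [Amat, h1, h2, h3]
        rw [he, abs_zero]
        positivity

lemma Bmat_bound {n : ℕ} (Δh U : ℕ → ℝ) (k : ℝ)
    (hk1 : ∀ i ≤ n, 1 ≤ |k * Δh i|) (i j : Fin n) :
    |Bmat n Δh U k i j| ≤ 2 * (1 + ∑ m ∈ Finset.range (n + 1), U m ^ 2) := by
  set S := 1 + ∑ m ∈ Finset.range (n + 1), U m ^ 2 with hSdef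
  have hsum_nonneg : (0 : ℝ) ≤ ∑ m ∈ Finset.range (n + 1), U m ^ 2 :=
    Finset.sum_nonneg fun m _ => sq_nonneg _
  have hS1 : 1 ≤ S := by simp [hSdef]; linarith
  have hki : 1 ≤ |k * Δh (i : ℕ)| := hk1 _ (le_of_lt i.isLt)
  have hki1 : 1 ≤ |k * Δh ((i : ℕ) + 1)| := hk1 _ i.isLt
  have hc1 := abs_coth_le hki
  have hc2 := abs_coth_le hki1
  have hpair : U (i : ℕ) ^ 2 + U ((i : ℕ) + 1) ^ 2 ≤ S := by
    have hsub : ({(i : ℕ), (i : ℕ) + 1} : Finset ℕ) ⊆ Finset.range (n + 1) := by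
      intro m hm
      simp only [Finset.mem_insert, Finset.mem_singleton] at hm
      rcases hm with h | h <;> simp [Finset.mem_range] <;> omega
    have := Finset.sum_le_sum_of_subset_of_nonneg hsub
      (fun m _ _ => sq_nonneg (U m))
    rw [Finset.sum_pair (by omega : (i : ℕ) ≠ (i : ℕ) + 1)] at this
    linarith
  by_cases h1 : (i : ℕ) = (j : ℕ)
  · have he : Bmat n Δh U k i j
        = U (i : ℕ) ^ 2 * coth (k * Δh (i : ℕ))
          + U ((i : ℕ) + 1) ^ 2 * coth (k * Δh ((i : ℕ) + 1)) := by
      simp [Bmat, h1]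
    rw [he]
    have := abs_add_le (U (i : ℕ) ^ 2 * coth (k * Δh (i : ℕ)))
      (U ((i : ℕ) + 1) ^ 2 * coth (k * Δh ((i : ℕ) + 1)))
    rw [abs_mul, abs_mul] at this
    have e1 : |U (i : ℕ) ^ 2| = U (i : ℕ) ^ 2 := abs_of_nonneg (sq_nonneg _)
    have e2 : |U ((i : ℕ) + 1) ^ 2| = U ((i : ℕ) + 1) ^ 2 := abs_of_nonneg (sq_nonneg _)
    rw [e1, e2] at this
    nlinarith [sq_nonneg (U (i : ℕ)), sq_nonneg (U ((i : ℕ) + 1))]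
  · by_cases h2 : (i : ℕ) + 1 = (j : ℕ)
    · have hcs := abs_csch_le hki1
      have he : Bmat n Δh U k i j = -(U ((i : ℕ) + 1) ^ 2 * csch (k * Δh ((i : ℕ) + 1))) := by
        simp [Bmat, h1, h2]
      rw [he, abs_neg, abs_mul, abs_of_nonneg (sq_nonneg (U ((i : ℕ) + 1)))]
      nlinarith [sq_nonneg (U ((i : ℕ) + 1)), sq_nonneg (U (i : ℕ))]
    · by_cases h3 : (j : ℕ) + 1 = (i : ℕ)
      · have hkj1 : 1 ≤ |k * Δh ((j : ℕ) + 1)| := hk1 _ (by omega)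
        have hcs := abs_csch_le hkj1
        have hpair' : U ((j : ℕ)) ^ 2 + U ((j : ℕ) + 1) ^ 2 ≤ S := by
          have hsub : ({(j : ℕ), (j : ℕ) + 1} : Finset ℕ) ⊆ Finset.range (n + 1) := by
            intro m hm
            simp only [Finset.mem_insert, Finset.mem_singleton] at hm
            rcases hm with h | h <;> simp [Finset.mem_range] <;> omega
          have := Finset.sum_le_sum_of_subset_of_nonneg hsub
            (fun m _ _ => sq_nonneg (U m))
          rw [Finset.sum_pair (by omega : (j : ℕ) ≠ (j : ℕ) + 1)] at this
          linarith
        have he : Bmat n Δh U k i j = -(U ((j : ℕ) + 1) ^ 2 * csch (k * Δh ((j : ℕ) + 1))) := by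
          simp [Bmat, h1, h2, h3]
        rw [he, abs_neg, abs_mul, abs_of_nonneg (sq_nonneg (U ((j : ℕ) + 1)))]
        nlinarith [sq_nonneg (U ((j : ℕ) + 1)), sq_nonneg (U (j : ℕ))]
      · have he : Bmat n Δh U k i j = 0 := by simp [Bmat, h1, h2, h3]
        rw [he, abs_zero]
        linarith

lemma Amat_form_pos {n : ℕ} (Δh : ℕ → ℝ) (k : ℝ)
    (hk1 : ∀ i ≤ n, 1 ≤ |k * Δh i|) (hk6 : 6 * n < |k|)
    (x : Fin n → ℂ) (hx : x ≠ 0) :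
    0 < (star x ⬝ᵥ ((Amat n Δh k).map (fun r : ℝ => (r : ℂ))) *ᵥ x).re := by
  have hkpos : (0 : ℝ) < |k| := lt_of_le_of_lt (by positivity) hk6
  have hk0 : k ≠ 0 := by
    intro h; rw [h, abs_zero] at hkpos; exact lt_irrefl 0 hkpos
  set σ := ∑ i, ‖x i‖ ^ 2 with hσdef
  have hσpos : 0 < σ := by
    obtain ⟨i, hi⟩ := Function.ne_iff.mp hx
    refine Finset.sum_pos' (fun i _ => by positivity) ⟨i, Finset.mem_univ i, pow_pos (norm_pos_iff.mpr hi) 2⟩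
  have hsplit : (Amat n Δh k).map (fun r : ℝ => (r : ℂ))
      = (1 : Matrix (Fin n) (Fin n) ℂ) + ((Amat n Δh k - 1).map (fun r : ℝ => (r : ℂ))) := by
    ext i j
    simp only [Matrix.map_apply, Matrix.add_apply, Matrix.sub_apply, Matrix.one_apply]
    split_ifs <;> push_cast <;> ring
  rw [hsplit, Matrix.add_mulVec, Matrix.one_mulVec, dotProduct_add, Complex.add_re]
  have hs : (star x ⬝ᵥ x).re = σ := by
    rw [dotProduct, Complex.re_sum]
    refine Finset.sum_congr rfl fun i _ => ?_
    rw [Pi.star_apply, Complex.star_def, ← Complex.normSq_eq_conj_mul_self, Complex.ofReal_re,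
      ← Complex.sq_norm]
  have hb := form_abs_le (Amat n Δh k - 1)
    (fun i j => Amat_sub_one_bound Δh k hk0 hk1 i j) x
  have hre : |(star x ⬝ᵥ ((Amat n Δh k - 1).map (fun r : ℝ => (r : ℂ))) *ᵥ x).re|
      ≤ 6 / |k| * n * σ := le_trans (Complex.abs_re_le_norm _) hb
  have hlt : 6 / |k| * n * σ < σ := by
    rw [div_mul_eq_mul_div, div_mul_eq_mul_div, div_lt_iff₀ hkpos]
    nlinarith
  rw [hs]
  have := abs_le.mp hre
  linarith [this.1]

set_option maxHeartbeats 1000000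


/-- for every `ε > 0` there is `K > 0` such that for every real `k` with
`|k| ≥ K`, every eigenvalue of `M(k)` has real part of absolute value `< ε`. -/
theorem statement18 (n : ℕ) (hn : 1 ≤ n) (Δh U : ℕ → ℝ) (hΔh : ∀ i ≤ n, 0 < Δh i)
    (ε : ℝ) (hε : 0 < ε) :
    ∃ K : ℝ, 0 < K ∧ ∀ k : ℝ, K ≤ |k| →
      ∀ lam ∈ (Mmat n Δh U k).charpoly.roots, |lam.re| < ε := by
  classical
  set S : ℝ := 1 + ∑ m ∈ Finset.range (n + 1), U m ^ 2 with hSdef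
  have hsum_nonneg : (0 : ℝ) ≤ ∑ m ∈ Finset.range (n + 1), U m ^ 2 :=
    Finset.sum_nonneg fun m _ => sq_nonneg _
  have hS1 : 1 ≤ S := by simp only [hSdef]; linarith
  set K0 : ℝ := ∑ m ∈ Finset.range (n + 1), 1 / Δh m with hK0def
  have hK0pos : 0 < K0 := by
    refine Finset.sum_pos (fun m hm => ?_) ⟨0, by simp⟩
    have := hΔh m (by simpa [Nat.lt_succ_iff] using Finset.mem_range.mp hm)
    positivity
  refine ⟨max (6 * n + 1) (max (2 * S * n + 1) K0),
    lt_of_lt_of_le (by positivity) (le_max_left _ _), ?_⟩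
  intro k hk lam hlam
  have hk6' : (6 : ℝ) * n + 1 ≤ |k| := le_trans (le_max_left _ _) hk
  have hk6 : (6 : ℝ) * n < |k| := by linarith
  have hk1le : (1 : ℝ) ≤ |k| := by
    have : (0:ℝ) ≤ 6 * n := by positivity
    linarith
  have hkpos : (0 : ℝ) < |k| := by linarith
  have hk0 : k ≠ 0 := by
    intro h; rw [h, abs_zero] at hkpos; exact lt_irrefl 0 hkpos
  have hk2S : 2 * S * n < |k| := by
    have := le_trans (le_trans (le_max_left _ _) (le_max_right (6 * (n:ℝ) + 1) _)) hk
    linarith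
  have hkK0 : K0 ≤ |k| := le_trans (le_trans (le_max_right _ _) (le_max_right _ _)) hk
  have hkΔ : ∀ i ≤ n, 1 ≤ |k * Δh i| := by
    intro i hi
    have hΔi := hΔh i hi
    have h1i : 1 / Δh i ≤ K0 := by
      refine Finset.single_le_sum (f := fun m => 1 / Δh m) (fun m hm => ?_) ?_
      · have := hΔh m (by simpa [Nat.lt_succ_iff] using Finset.mem_range.mp hm)
        positivity
      · simp [Finset.mem_range, Nat.lt_succ_iff, hi]
    rw [abs_mul, abs_of_pos hΔi]
    calc (1:ℝ) = (1 / Δh i) * Δh i := by field_simp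
      _ ≤ |k| * Δh i := by
          exact mul_le_mul_of_nonneg_right (le_trans h1i hkK0) hΔi.le
  -- A(k) is invertible
  have hdetA : IsUnit (Amat n Δh k).det := by
    rw [isUnit_iff_ne_zero]
    intro hdet0
    obtain ⟨v, hv0, hv⟩ := Matrix.exists_mulVec_eq_zero_iff.mpr hdet0
    set x : Fin n → ℂ := fun i => ((v i : ℝ) : ℂ) with hxdef
    have hx0 : x ≠ 0 := by
      intro h
      apply hv0
      funext i
      have := congrFun h i
      simpa [hxdef, Complex.ofReal_eq_zero] using this
    have hmv : ((Amat n Δh k).map (fun r : ℝ => (r : ℂ))) *ᵥ x = 0 := by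
      funext i
      have hvi := congrFun hv i
      simp only [Matrix.mulVec, dotProduct, Pi.zero_apply] at hvi ⊢
      simp only [Matrix.map_apply, hxdef]
      calc ∑ j, ((Amat n Δh k i j : ℝ) : ℂ) * ((v j : ℝ) : ℂ)
          = ((∑ j, Amat n Δh k i j * v j : ℝ) : ℂ) := by push_cast; rfl
        _ = 0 := by rw [hvi]; exact Complex.ofReal_zero
    have hpos := Amat_form_pos Δh k hkΔ hk6 x hx0
    rw [hmv] at hpos
    simp at hpos
  -- eigenvector for lam
  have hroot : Polynomial.IsRoot (Mmat n Δh U k).charpoly lam :=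
    Polynomial.isRoot_of_mem_roots hlam
  have hdet : (lam • (1 : Matrix (Fin n ⊕ Fin n) (Fin n ⊕ Fin n) ℂ) - Mmat n Δh U k).det = 0 := by
    rw [← charpoly_eval_eq]; exact hroot
  obtain ⟨v, hv0, hv⟩ := Matrix.exists_mulVec_eq_zero_iff.mpr hdet
  have hMv : (Mmat n Δh U k) *ᵥ v = lam • v := by
    rw [Matrix.sub_mulVec, Matrix.smul_mulVec, Matrix.one_mulVec] at hv
    have := sub_eq_zero.mp hv
    exact this.symm
  set x1 : Fin n → ℂ := fun i => v (Sum.inl i) with hx1def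
  set x2 : Fin n → ℂ := fun i => v (Sum.inr i) with hx2def
  have hvelim : v = Sum.elim x1 x2 := by funext s; cases s <;> rfl
  set P := ((Amat n Δh k)⁻¹ *
      (k • Bmat n Δh U k - k ^ 4 • (1 : Matrix (Fin n) (Fin n) ℝ))).map
    (fun x : ℝ => (x : ℂ)) with hPdef
  set Q := ((-2 * Complex.I) • ((Amat n Δh k)⁻¹ * Cmat n Δh U k).map (fun x : ℝ => (x : ℂ)))
    with hQdef
  have hMeq : Mmat n Δh U k = Matrix.fromBlocks 0 1 P Q := rfl
  rw [hMeq, hvelim, Matrix.fromBlocks_mulVec] at hMv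
  have h1 : x2 = lam • x1 := by
    funext i
    have := congrFun hMv (Sum.inl i)
    simpa [Matrix.zero_mulVec, Matrix.one_mulVec] using this
  have h2 : P *ᵥ x1 + Q *ᵥ x2 = lam • x2 := by
    funext i
    have := congrFun hMv (Sum.inr i)
    simpa using this
  have hx10 : x1 ≠ 0 := by
    intro h
    apply hv0
    rw [hvelim, h1, h]
    funext s; cases s <;> simp
  -- multiply through by A
  have hAc : ∀ (R : Matrix (Fin n) (Fin n) ℝ) (y : Fin n → ℂ),
      ((Amat n Δh k).map (fun r : ℝ => (r : ℂ))) *ᵥ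
        ((((Amat n Δh k)⁻¹ * R).map (fun r : ℝ => (r : ℂ))) *ᵥ y)
      = (R.map (fun r : ℝ => (r : ℂ))) *ᵥ y := by
    intro R y
    rw [Matrix.mulVec_mulVec]
    congr 1
    have hmm : (Amat n Δh k).map (fun r : ℝ => (r : ℂ)) *
        ((Amat n Δh k)⁻¹ * R).map (fun r : ℝ => (r : ℂ))
        = ((Amat n Δh k) * ((Amat n Δh k)⁻¹ * R)).map (fun r : ℝ => (r : ℂ)) :=
      (Matrix.map_mul (f := Complex.ofRealHom)).symm
    rw [hmm, ← Matrix.mul_assoc, Matrix.mul_nonsing_inv _ hdetA, Matrix.one_mul]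
  set Ac := (Amat n Δh k).map (fun r : ℝ => (r : ℂ)) with hAcdef
  set Bc := (Bmat n Δh U k).map (fun r : ℝ => (r : ℂ)) with hBcdef
  set Cc := (Cmat n Δh U k).map (fun r : ℝ => (r : ℂ)) with hCcdef
  have h3 : Ac *ᵥ (P *ᵥ x1) + Ac *ᵥ (Q *ᵥ x2) = lam • (Ac *ᵥ x2) := by
    rw [← Matrix.mulVec_add, h2, Matrix.mulVec_smul]
  have hPterm : Ac *ᵥ (P *ᵥ x1)
      = ((k • Bmat n Δh U k - k ^ 4 • (1 : Matrix (Fin n) (Fin n) ℝ)).map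
          (fun r : ℝ => (r : ℂ))) *ᵥ x1 := hAc _ x1
  have hQterm : Ac *ᵥ (Q *ᵥ x2) = (-2 * Complex.I) • (Cc *ᵥ x2) := by
    rw [hQdef, Matrix.smul_mulVec, Matrix.mulVec_smul, hAc]
  rw [hPterm, hQterm, h1, Matrix.mulVec_smul, Matrix.mulVec_smul] at h3
  -- dot with star x1
  have h5 := congrArg (fun w => star x1 ⬝ᵥ w) h3
  simp only [dotProduct_add, dotProduct_smul, smul_eq_mul] at h5
  set a := star x1 ⬝ᵥ (Ac *ᵥ x1) with hadef
  set cF := star x1 ⬝ᵥ (Cc *ᵥ x1) with hcdef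
  set bF := star x1 ⬝ᵥ (Bc *ᵥ x1) with hbdef
  set sF := star x1 ⬝ᵥ x1 with hsdef
  have hDm : ((k • Bmat n Δh U k - k ^ 4 • (1 : Matrix (Fin n) (Fin n) ℝ)).map
      (fun r : ℝ => (r : ℂ)))
      = (k : ℂ) • Bc - ((k : ℂ) ^ 4) • (1 : Matrix (Fin n) (Fin n) ℂ) := by
    ext i j
    simp only [Matrix.map_apply, Matrix.sub_apply, Matrix.smul_apply, Matrix.one_apply,
      hBcdef, smul_eq_mul]
    split_ifs <;> push_cast <;> ring
  have hDterm : star x1 ⬝ᵥ (((k • Bmat n Δh U k - k ^ 4 • (1 : Matrix (Fin n) (Fin n) ℝ)).map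
      (fun r : ℝ => (r : ℂ))) *ᵥ x1) = (k : ℂ) * bF - (k : ℂ) ^ 4 * sF := by
    rw [hDm, Matrix.sub_mulVec, Matrix.smul_mulVec, Matrix.smul_mulVec,
      Matrix.one_mulVec, dotProduct_sub, dotProduct_smul, dotProduct_smul]
    simp [hbdef, hsdef]
  rw [hDterm] at h5
  -- realness
  have haim : a.im = 0 := form_im_eq_zero _ (Amat_symm Δh k) x1
  have hbim : bF.im = 0 := form_im_eq_zero _ (Bmat_symm Δh U k) x1
  have hcim : cF.im = 0 := form_im_eq_zero _ (Cmat_symm Δh U k) x1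
  set σ : ℝ := ∑ i, ‖x1 i‖ ^ 2 with hσdef
  have hσpos : 0 < σ := by
    obtain ⟨i, hi⟩ := Function.ne_iff.mp hx10
    exact Finset.sum_pos' (fun i _ => by positivity)
      ⟨i, Finset.mem_univ i, pow_pos (norm_pos_iff.mpr hi) 2⟩
  have hsF : sF = (σ : ℂ) := by
    rw [hsdef, dotProduct, hσdef, Complex.ofReal_sum]
    refine Finset.sum_congr rfl fun i _ => ?_
    rw [Pi.star_apply, Complex.sq_norm, Complex.normSq_eq_conj_mul_self, Complex.star_def]
  have harpos : 0 < a.re := Amat_form_pos Δh k hkΔ hk6 x1 hx10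
  have hbabs : |bF.re| ≤ 2 * S * n * σ := by
    have := form_abs_le (Bmat n Δh U k) (fun i j => Bmat_bound Δh U k hkΔ i j) x1
    exact le_trans (Complex.abs_re_le_norm _) this
  -- turn into real equations
  have haR : a = ((a.re : ℝ) : ℂ) := by
    apply Complex.ext <;> simp [haim]
  have hbR : bF = ((bF.re : ℝ) : ℂ) := by
    apply Complex.ext <;> simp [hbim]
  have hcR : cF = ((cF.re : ℝ) : ℂ) := by
    apply Complex.ext <;> simp [hcim]
  rw [haR, hbR, hcR, hsF] at h5
  set ar := a.re
  set br := bF.re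
  set cr := cF.re
  set α := lam.re with hα
  set β := lam.im with hβ
  have hlamconst : lam = Complex.mk α β := rfl
  rw [Complex.ext_iff] at h5
  simp only [Complex.add_re, Complex.add_im, Complex.sub_re, Complex.sub_im, Complex.mul_re,
    Complex.mul_im, Complex.ofReal_re, Complex.ofReal_im, Complex.I_re, Complex.I_im,
    Complex.neg_re, Complex.neg_im, Complex.re_ofNat, Complex.im_ofNat,
    ← Complex.ofReal_pow, mul_zero, zero_mul, sub_zero, add_zero, zero_add, neg_zero,
    mul_one, one_mul, zero_sub, mul_neg, neg_neg] at h5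
  obtain ⟨hre, him⟩ := h5
  -- k^4 dominance
  have hk4 : k ^ 4 = |k| ^ 4 := by
    rw [← abs_pow]
    exact (abs_of_nonneg (by positivity)).symm
  have hd : k * br - k ^ 4 * σ < 0 := by
    have h1' : k * br ≤ |k| * (2 * S * n * σ) := by
      calc k * br ≤ |k * br| := le_abs_self _
        _ = |k| * |br| := abs_mul _ _
        _ ≤ |k| * (2 * S * n * σ) := by
            exact mul_le_mul_of_nonneg_left hbabs (abs_nonneg k)
    have h2' : |k| * (2 * S * n * σ) < |k| * (|k| * σ) := by
      apply mul_lt_mul_of_pos_left _ hkpos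
      exact mul_lt_mul_of_pos_right hk2S hσpos
    have h3' : |k| * (|k| * σ) ≤ k ^ 4 * σ := by
      rw [hk4]
      have hp : |k| ^ 2 ≤ |k| ^ 4 := pow_le_pow_right₀ hk1le (by norm_num)
      calc |k| * (|k| * σ) = |k| ^ 2 * σ := by ring
        _ ≤ |k| ^ 4 * σ := mul_le_mul_of_nonneg_right hp hσpos.le
    linarith
  -- conclude lam.re = 0
  have hα0 : α = 0 := by
    by_contra hα0
    have hα2 : 0 < α ^ 2 := lt_of_le_of_ne (sq_nonneg α) (Ne.symm (pow_ne_zero 2 hα0))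
    -- from imaginary part: ar * β + cr = 0
    have he1 : α * (ar * β + cr) = 0 := by linear_combination (-1 / 2 : ℝ) * him
    have he2 : ar * β + cr = 0 := by
      rcases mul_eq_zero.mp he1 with h | h
      · exact absurd h hα0
      · exact h
    have he3 : ar * β ^ 2 + β * cr = 0 := by
      have h := congrArg (fun t => β * t) he2
      simpa using by linear_combination h
    nlinarith [hre, hd, he3, mul_pos harpos hα2, mul_nonneg harpos.le (sq_nonneg β)]
  rw [hα0]
  simpa using hε
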